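/- Let ⁰a = (a₀; a₁, a₂) be a scator with a₀ ≠ 0, a₁ ≠ 0, a₂ ≠ 0 and ‖⁰a‖² ≠ 0. Then each duality operation commutes with scator inversion: bar((⁰a)⁻¹) = (bar ⁰a)⁻¹, bar((⁰a)⁻¹)ᵢ = (bar ⁰aᵢ)⁻¹, and bar((⁰a)⁻¹)ₑ = (bar ⁰aₑ)⁻¹, where the inverse of any scator ⁰c with nonzero modulus squared is (⁰c)⁻¹ = (1/‖⁰c‖²) · ⁰c*. -/

import Mathlib

/-- A (1+2)-dimensional scator: scalar component `s` and director components `x`, `y`. -/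
structure Scator where
  s : ℝ
  x : ℝ
  y : ℝ

namespace Scator

/-- Componentwise addition of scators. -/
noncomputable def add (a b : Scator) : Scator := ⟨a.s + b.s, a.x + b.x, a.y + b.y⟩

/-- Componentwise subtraction of scators. -/
noncomputable def sub (a b : Scator) : Scator := ⟨a.s - b.s, a.x - b.x, a.y - b.y⟩

/-- Componentwise multiplication of a scator by a real scalar. -/
noncomputable def smul (l : ℝ) (a : Scator) : Scator := ⟨l * a.s, l * a.x, l * a.y⟩

/-- The scator product. -/
noncomputable def mul (a b : Scator) : Scator :=
  ⟨a.s * b.s + a.x * b.x + a.y * b.y + a.x * a.y * b.x * b.y / (a.s * b.s),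
   a.s * b.x + a.x * b.s + a.x * a.y * b.y / a.s + a.y * b.x * b.y / b.s,
   a.s * b.y + a.y * b.s + a.x * a.y * b.x / a.s + a.x * b.x * b.y / b.s⟩

/-- Hypercomplex conjugate. -/
noncomputable def conj (a : Scator) : Scator := ⟨a.s, -a.x, -a.y⟩

/-- Ordinary dual scator. -/
noncomputable def bar (a : Scator) : Scator := ⟨a.x * a.y / a.s, a.y, a.x⟩

/-- Internal dual scator. -/
noncomputable def barI (a : Scator) : Scator := ⟨a.x, a.s, a.x * a.y / a.s⟩

/-- External dual scator. -/
noncomputable def barE (a : Scator) : Scator := ⟨a.y, a.x * a.y / a.s, a.s⟩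

/-- Modulus squared of a scator. -/
noncomputable def norm2 (a : Scator) : ℝ := a.s ^ 2 - a.x ^ 2 - a.y ^ 2 + a.x ^ 2 * a.y ^ 2 / a.s ^ 2

/-- Inverse of a scator with respect to the scator product. -/
noncomputable def inv (a : Scator) : Scator := smul (1 / norm2 a) (conj a)

end Scator

theorem dualities_commute_with_inversion (a : Scator)
    (h0 : a.s ≠ 0) (h1 : a.x ≠ 0) (h2 : a.y ≠ 0) (hn : Scator.norm2 a ≠ 0) :
    Scator.bar (Scator.inv a) = Scator.inv (Scator.bar a) ∧
    Scator.barI (Scator.inv a) = Scator.inv (Scator.barI a) ∧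
    Scator.barE (Scator.inv a) = Scator.inv (Scator.barE a) := by
  obtain ⟨s, x, y⟩ := a
  simp only at h0 h1 h2
  have hb : Scator.norm2 (Scator.bar ⟨s, x, y⟩) = Scator.norm2 ⟨s, x, y⟩ := by
    simp only [Scator.norm2, Scator.bar]
    field_simp
    ring
  have hi : Scator.norm2 (Scator.barI ⟨s, x, y⟩) = -Scator.norm2 ⟨s, x, y⟩ := by
    simp only [Scator.norm2, Scator.barI]
    field_simp
    ring
  have he : Scator.norm2 (Scator.barE ⟨s, x, y⟩) = -Scator.norm2 ⟨s, x, y⟩ := by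
    simp only [Scator.norm2, Scator.barE]
    field_simp
    ring
  set N := Scator.norm2 ⟨s, x, y⟩ with hNdef
  clear_value N
  refine ⟨?_, ?_, ?_⟩ <;>
    (simp only [Scator.inv, hb, hi, he];
     simp only [Scator.bar, Scator.barI, Scator.barE, Scator.smul,
      Scator.conj, Scator.mk.injEq, ← hNdef];
     refine ⟨?_, ?_, ?_⟩)
  all_goals try field_simp
  all_goals try ring_nf
  all_goals simp [mul_inv_cancel_right₀ hn]
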